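/- arXiv:1901.04211 — 2 statements merged into one kernel-verified Lean document; each statement's English description precedes it below -/
import Mathlib

section
/- Let n ≥ 1, let a < b be real numbers, let C be an n×n complex matrix and let D : ℝ → Matrix n n ℂ be continuous on [a,b]. Suppose Y, Z : ℝ → Matrix n n ℂ satisfy, for every s ∈ [a,b], that Y has derivative C·Z(s) at s and Z has derivative −D(s)·Y(s) at s, and suppose det Y(s) ≠ 0 for every s ∈ [a,b]. Then the function H(s) := Z(s)·Y(s)⁻¹ satisfies the matrix Riccati equation: for every s ∈ [a,b], H has derivative −(H(s)·C·H(s) + D(s)) at s. -/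
open Matrix Set

attribute [local instance] Matrix.normedAddCommGroup Matrix.normedSpace

private lemma matrix_hasDerivAt_iff {n : ℕ} {f : ℝ → Matrix (Fin n) (Fin n) ℂ}
    {f' : Matrix (Fin n) (Fin n) ℂ} {s : ℝ} :
    HasDerivAt f f' s ↔ ∀ i j, HasDerivAt (fun t => f t i j) (f' i j) s := by
  refine (hasDerivAt_pi (φ := f) (φ' := f')).trans ?_
  exact forall_congr' fun i => hasDerivAt_pi

private lemma matrix_det_differentiableAt {n : ℕ} {A : ℝ → Matrix (Fin n) (Fin n) ℂ} {s : ℝ}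
    (h : ∀ i j, DifferentiableAt ℝ (fun t => A t i j) s) :
    DifferentiableAt ℝ (fun t => (A t).det) s := by
  simp only [Matrix.det_apply']
  apply DifferentiableAt.fun_sum
  intro σ _
  apply DifferentiableAt.const_mul
  exact DifferentiableAt.fun_finsetProd (fun i _ => h (σ i) i)

private lemma matrix_mul_hasDerivAt {n : ℕ} {f g : ℝ → Matrix (Fin n) (Fin n) ℂ}
    {f' g' : Matrix (Fin n) (Fin n) ℂ} {s : ℝ}
    (hf : HasDerivAt f f' s) (hg : HasDerivAt g g' s) :
    HasDerivAt (fun t => f t * g t) (f' * g s + f s * g') s := by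
  rw [matrix_hasDerivAt_iff] at hf hg ⊢
  intro i j
  simp only [Matrix.mul_apply, Matrix.add_apply, ← Finset.sum_add_distrib]
  exact HasDerivAt.fun_sum fun k _ => ((hf i k).mul (hg k j)).congr_deriv (by ring)

/-- Lemma 3.2 (existence direction): solutions of the first-order linear system
`Y' = C Z`, `Z' = -D Y` with `det Y ≠ 0` give solutions `H = Z Y⁻¹` of the
matrix Riccati equation `H' + H C H + D = 0`. -/
theorem riccati_from_linear_system
    (n : ℕ) (hn : 1 ≤ n) (a b : ℝ) (hab : a < b)
    (C : Matrix (Fin n) (Fin n) ℂ)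
    (D : ℝ → Matrix (Fin n) (Fin n) ℂ)
    (hD : ContinuousOn D (Set.Icc a b))
    (Y Z : ℝ → Matrix (Fin n) (Fin n) ℂ)
    (hY : ∀ s ∈ Set.Icc a b, HasDerivAt Y (C * Z s) s)
    (hZ : ∀ s ∈ Set.Icc a b, HasDerivAt Z (-(D s * Y s)) s)
    (hdet : ∀ s ∈ Set.Icc a b, (Y s).det ≠ 0) :
    ∀ s ∈ Set.Icc a b,
      HasDerivAt (fun s => Z s * (Y s)⁻¹)
        (-((Z s * (Y s)⁻¹) * C * (Z s * (Y s)⁻¹) + D s)) s := by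
  intro s hs
  have hYs := hY s hs
  have hZs := hZ s hs
  have hYent : ∀ i j, HasDerivAt (fun t => Y t i j) ((C * Z s) i j) s :=
    matrix_hasDerivAt_iff.mp hYs
  have hYd : ∀ i j, DifferentiableAt ℝ (fun t => Y t i j) s :=
    fun i j => (hYent i j).differentiableAt
  -- the determinant function
  have hg : DifferentiableAt ℝ (fun t => (Y t).det) s := matrix_det_differentiableAt hYd
  have hgs : (Y s).det ≠ 0 := hdet s hs
  -- the inverse function W
  set W : ℝ → Matrix (Fin n) (Fin n) ℂ := fun t => (Y t)⁻¹ with hWdef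
  have hWeq : W = fun t => ((Y t).det)⁻¹ • (Y t).adjugate := by
    funext t
    show (Y t)⁻¹ = _
    rw [Matrix.inv_def, Ring.inverse_eq_inv]
  -- adjugate is differentiable
  have hadj : ∀ i j, DifferentiableAt ℝ (fun t => (Y t).adjugate i j) s := by
    intro i j
    simp only [Matrix.adjugate_apply]
    apply matrix_det_differentiableAt
    intro k l
    by_cases hk : k = j
    · simp only [hk, Matrix.updateRow_self]
      exact differentiableAt_const _
    · simp only [Matrix.updateRow_ne hk]
      exact hYd k l
  have hWdiff : DifferentiableAt ℝ W s := by
    rw [hWeq]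
    refine differentiableAt_pi.mpr ?_
    intro i
    rw [differentiableAt_pi]
    intro j
    have : (fun t => (((Y t).det)⁻¹ • (Y t).adjugate) i j)
        = fun t => ((Y t).det)⁻¹ * (Y t).adjugate i j := by
      funext t; simp [Matrix.smul_apply, smul_eq_mul]
    rw [this]
    exact (hg.inv hgs).mul (hadj i j)
  have hW : HasDerivAt W (deriv W s) s := hWdiff.hasDerivAt
  set W' := deriv W s with hW'def
  -- W * Y = 1 near s
  have hgc : ContinuousAt (fun t => (Y t).det) s := hg.continuousAt
  have hev : ∀ᶠ t in nhds s, (Y t).det ≠ 0 := hgc.eventually_ne hgs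
  have hWY1 : (fun t => W t * Y t) =ᶠ[nhds s] fun _ => 1 := by
    filter_upwards [hev] with t ht
    exact Matrix.nonsing_inv_mul _ (isUnit_iff_ne_zero.mpr ht)
  have hprod : HasDerivAt (fun t => W t * Y t) (W' * Y s + W s * (C * Z s)) s :=
    matrix_mul_hasDerivAt hW hYs
  have hzero : HasDerivAt (fun t => W t * Y t) 0 s :=
    (hasDerivAt_const s (1 : Matrix (Fin n) (Fin n) ℂ)).congr_of_eventuallyEq hWY1
  have huniq : W' * Y s + W s * (C * Z s) = 0 := hprod.unique hzero
  have hYW : Y s * W s = 1 := Matrix.mul_nonsing_inv _ (isUnit_iff_ne_zero.mpr hgs)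
  have hW'val : W' = -(W s * (C * Z s) * W s) := by
    have h1 : W' * Y s = -(W s * (C * Z s)) := by
      rw [eq_neg_iff_add_eq_zero]; exact huniq
    calc W' = W' * (Y s * W s) := by rw [hYW, mul_one]
    _ = (W' * Y s) * W s := by rw [mul_assoc]
    _ = -(W s * (C * Z s)) * W s := by rw [h1]
    _ = -(W s * (C * Z s) * W s) := by rw [neg_mul]
  have hfinal : HasDerivAt (fun t => Z t * W t) (-(D s * Y s) * W s + Z s * W') s :=
    matrix_mul_hasDerivAt hZs hW
  convert hfinal using 1
  rw [hW'val]
  have hDs : D s * Y s * W s = D s := by rw [mul_assoc, hYW, mul_one]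
  rw [neg_mul, hDs]
  rw [mul_neg]
  rw [neg_add_rev]
  congr 1
  simp only [mul_assoc]
  rfl
end

section
/- Let T > 0, let f : ℝ → ℂ be continuously differentiable with support contained in the open interval (0,T), and let φ : ℝ → ℂ be twice continuously differentiable on [0,T] with Im φ(τ) ≥ 0 and |φ'(τ)| ≥ 1/2 for every τ ∈ [0,T]. Then there exists C > 0 such that for every ρ ≥ 1 and every t ∈ [0,T], |∫_0^t f(τ) e^{iρφ(τ)} dτ| ≤ C/ρ. -/
open Set intervalIntegral

/-- Non-stationary phase estimate used for the Gaussian beam remainder bounds: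
if `f` is `C¹` with support in `(0,T)` and the phase `φ` is `C²` on `[0,T]`
with `Im φ ≥ 0` and `|φ'| ≥ 1/2`, then
`|∫_0^t f e^{iρφ}| ≤ C/ρ` uniformly for `ρ ≥ 1` and `t ∈ [0,T]`. -/
theorem nonstationary_phase_estimate
    (T : ℝ) (hT : 0 < T)
    (f : ℝ → ℂ) (hf : ContDiff ℝ 1 f)
    (hsupp : Function.support f ⊆ Set.Ioo 0 T)
    (φ φ' φ'' : ℝ → ℂ)
    (hφ : ∀ τ ∈ Set.Icc (0:ℝ) T, HasDerivWithinAt φ (φ' τ) (Set.Icc (0:ℝ) T) τ)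
    (hφ' : ∀ τ ∈ Set.Icc (0:ℝ) T, HasDerivWithinAt φ' (φ'' τ) (Set.Icc (0:ℝ) T) τ)
    (hφ'' : ContinuousOn φ'' (Set.Icc (0:ℝ) T))
    (hIm : ∀ τ ∈ Set.Icc (0:ℝ) T, 0 ≤ (φ τ).im)
    (hlow : ∀ τ ∈ Set.Icc (0:ℝ) T, 1 / 2 ≤ ‖φ' τ‖) :
    ∃ C > 0, ∀ ρ : ℝ, 1 ≤ ρ → ∀ t ∈ Set.Icc (0:ℝ) T,
      ‖∫ τ in (0:ℝ)..t, f τ * Complex.exp (Complex.I * ρ * φ τ)‖ ≤ C / ρ := by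
  -- continuity facts
  have hfc : Continuous f := hf.continuous
  have hf' : Continuous (deriv f) := hf.continuous_deriv le_rfl
  have hφc : ContinuousOn φ (Icc 0 T) := fun x hx => (hφ x hx).continuousWithinAt
  have hφ'c : ContinuousOn φ' (Icc 0 T) := fun x hx => (hφ' x hx).continuousWithinAt
  -- bounds
  obtain ⟨Mf, hMf⟩ := isCompact_Icc.exists_bound_of_continuousOn
    (hfc.continuousOn : ContinuousOn f (Icc 0 T))
  obtain ⟨Mg, hMg⟩ := isCompact_Icc.exists_bound_of_continuousOn
    (hf'.continuousOn : ContinuousOn (deriv f) (Icc 0 T))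
  obtain ⟨Mp, hMp⟩ := isCompact_Icc.exists_bound_of_continuousOn hφ''
  have h0T : (0:ℝ) ∈ Icc (0:ℝ) T := ⟨le_rfl, hT.le⟩
  have hMf0 : 0 ≤ Mf := le_trans (norm_nonneg _) (hMf 0 h0T)
  have hMg0 : 0 ≤ Mg := le_trans (norm_nonneg _) (hMg 0 h0T)
  have hMp0 : 0 ≤ Mp := le_trans (norm_nonneg _) (hMp 0 h0T)
  refine ⟨2*Mf + T*(2*Mg + 4*Mf*Mp) + 1, by positivity, ?_⟩
  intro ρ hρ t ht
  have hρ0 : (0:ℝ) < ρ := lt_of_lt_of_le one_pos hρ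
  have hsub : Icc (0:ℝ) t ⊆ Icc 0 T := Icc_subset_Icc le_rfl ht.2
  have huIcc : uIcc (0:ℝ) t = Icc 0 t := uIcc_of_le ht.1
  set c : ℂ := Complex.I * (ρ:ℝ) with hc
  have hcabs : ‖c‖ = ρ := by
    simp [hc, abs_of_pos hρ0]
  have hcne : c ≠ 0 := by
    intro h; rw [h] at hcabs; simp at hcabs; exact hρ0.ne' hcabs.symm
  have hne : ∀ τ ∈ Icc (0:ℝ) T, c * φ' τ ≠ 0 := by
    intro τ hτ
    have := hlow τ hτ
    have : φ' τ ≠ 0 := by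
      intro h; rw [h] at this; simp at this; linarith
    exact mul_ne_zero hcne this
  -- the functions
  set v : ℝ → ℂ := fun τ => Complex.exp (c * φ τ) with hv
  set u : ℝ → ℂ := fun τ => f τ * (c * φ' τ)⁻¹ with hu
  set u' : ℝ → ℂ := fun τ => deriv f τ * (c * φ' τ)⁻¹
      + f τ * (-(c * φ'' τ) / (c * φ' τ) ^ 2) with hu'
  set v' : ℝ → ℂ := fun τ => c * φ' τ * v τ with hv'
  -- |v| ≤ 1 on Icc 0 T
  have hvle : ∀ τ ∈ Icc (0:ℝ) T, ‖v τ‖ ≤ 1 := by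
    intro τ hτ
    rw [hv]
    simp only [Complex.norm_exp]
    have hre : (c * φ τ).re = -(ρ * (φ τ).im) := by
      simp [hc]
    rw [hre, Real.exp_le_one_iff]
    have := hIm τ hτ
    nlinarith
  -- |(c φ')⁻¹| ≤ 2/ρ
  have hinv : ∀ τ ∈ Icc (0:ℝ) T, ‖(c * φ' τ)⁻¹‖ ≤ 2 / ρ := by
    intro τ hτ
    rw [norm_inv, norm_mul, hcabs]
    have h1 := hlow τ hτ
    have h2 : ρ / 2 ≤ ρ * ‖φ' τ‖ := by nlinarith
    calc (ρ * ‖φ' τ‖)⁻¹ ≤ (ρ / 2)⁻¹ :=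
          inv_anti₀ (by positivity) h2
      _ = 2 / ρ := by rw [inv_div]
  -- derivatives
  have hvd : ∀ τ ∈ Ioo (0:ℝ) T, HasDerivAt v (v' τ) τ := by
    intro τ hτ
    have hφd : HasDerivAt φ (φ' τ) τ :=
      (hφ τ (mem_Icc_of_Ioo hτ)).hasDerivAt (Icc_mem_nhds hτ.1 hτ.2)
    have := ((hφd.const_mul c).cexp)
    simpa [hv, hv', mul_comm, mul_assoc, mul_left_comm] using this
  have hud : ∀ τ ∈ Ioo (0:ℝ) T, HasDerivAt u (u' τ) τ := by
    intro τ hτ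
    have hφ'd : HasDerivAt φ' (φ'' τ) τ :=
      (hφ' τ (mem_Icc_of_Ioo hτ)).hasDerivAt (Icc_mem_nhds hτ.1 hτ.2)
    have hfd : HasDerivAt f (deriv f τ) τ :=
      (hf.differentiable one_ne_zero τ).hasDerivAt
    have hi : HasDerivAt (fun τ => (c * φ' τ)⁻¹)
        (-(c * φ'' τ) / (c * φ' τ) ^ 2) τ := by
      have h := (hasDerivAt_const τ (1:ℂ)).div (hφ'd.const_mul c)
        (hne τ (mem_Icc_of_Ioo hτ))
      simp only [Pi.div_def, one_div] at h
      rw [show -(c * φ'' τ) / (c * φ' τ) ^ 2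
          = (0 * (c * φ' τ) - 1 * (c * φ'' τ)) / (c * φ' τ) ^ 2 from by ring]
      exact h
    exact hfd.mul hi
  -- continuity
  have hφ'cT : ContinuousOn (fun τ => (c * φ' τ)⁻¹) (Icc 0 T) :=
    ((continuousOn_const.mul hφ'c).inv₀ (fun τ hτ => hne τ hτ))
  have hucont : ContinuousOn u (Icc 0 T) := (hfc.continuousOn).mul hφ'cT
  have hvcont : ContinuousOn v (Icc 0 T) :=
    (continuousOn_const.mul hφc).cexp
  have hu'cont : ContinuousOn u' (Icc 0 T) := by
    apply ContinuousOn.add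
    · exact hf'.continuousOn.mul hφ'cT
    · exact hfc.continuousOn.mul
        (((continuousOn_const.mul hφ'').neg).div
          ((continuousOn_const.mul hφ'c).pow 2) (fun τ hτ => pow_ne_zero 2 (hne τ hτ)))
  have hv'cont : ContinuousOn v' (Icc 0 T) := (continuousOn_const.mul hφ'c).mul hvcont
  have hu'int : IntervalIntegrable u' MeasureTheory.volume 0 t :=
    (hu'cont.mono (huIcc ▸ hsub : uIcc (0:ℝ) t ⊆ Icc 0 T)).intervalIntegrable
  have hv'int : IntervalIntegrable v' MeasureTheory.volume 0 t :=
    (hv'cont.mono (huIcc ▸ hsub : uIcc (0:ℝ) t ⊆ Icc 0 T)).intervalIntegrable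
  -- integration by parts
  have hIoo : Ioo (min (0:ℝ) t) (max 0 t) ⊆ Ioo 0 T := by
    rw [min_eq_left ht.1, max_eq_right ht.1]
    exact Ioo_subset_Ioo le_rfl ht.2
  have ibp := intervalIntegral.integral_deriv_mul_eq_sub_of_hasDerivAt
    (hucont.mono (huIcc ▸ hsub)) (hvcont.mono (huIcc ▸ hsub))
    (fun x hx => hud x (hIoo hx)) (fun x hx => hvd x (hIoo hx)) hu'int hv'int
  have hu0 : u 0 = 0 := by
    have : f 0 = 0 := by
      by_contra h
      exact absurd (hsupp h) (by simp)
    simp [hu, this]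
  rw [hu0, zero_mul, sub_zero] at ibp
  -- uv' = fv
  have huv' : ∀ τ ∈ Icc (0:ℝ) T, u τ * v' τ = f τ * v τ := by
    intro τ hτ
    have := hne τ hτ
    simp only [hu, hv']
    rw [mul_assoc, inv_mul_cancel_left₀ this]
  -- integrability of the other pieces
  have hsubu : uIcc (0:ℝ) t ⊆ Icc 0 T := huIcc ▸ hsub
  have hfvint : IntervalIntegrable (fun τ => f τ * v τ) MeasureTheory.volume 0 t :=
    ((hfc.continuousOn.mul hvcont).mono hsubu).intervalIntegrable
  have hu'vint : IntervalIntegrable (fun τ => u' τ * v τ) MeasureTheory.volume 0 t :=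
    ((hu'cont.mul hvcont).mono hsubu).intervalIntegrable
  have huv'int : IntervalIntegrable (fun τ => u τ * v' τ) MeasureTheory.volume 0 t :=
    ((hucont.mul hv'cont).mono hsubu).intervalIntegrable
  rw [intervalIntegral.integral_add hu'vint huv'int] at ibp
  have h1 : (∫ τ in (0:ℝ)..t, u τ * v' τ) = ∫ τ in (0:ℝ)..t, f τ * v τ :=
    intervalIntegral.integral_congr (fun x hx => huv' x (hsubu hx))
  rw [h1] at ibp
  have key : (∫ τ in (0:ℝ)..t, f τ * v τ)
      = u t * v t - ∫ τ in (0:ℝ)..t, u' τ * v τ := by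
    rw [eq_sub_iff_add_eq, add_comm]; exact ibp
  -- the goal's integrand is f τ * v τ
  show ‖∫ τ in (0:ℝ)..t, f τ * v τ‖ ≤ _ / ρ
  rw [key]
  -- pointwise bound on u' * v
  have hu'b : ∀ τ ∈ Icc (0:ℝ) T,
      ‖u' τ * v τ‖ ≤ (2*Mg + 4*Mf*Mp) / ρ := by
    intro τ hτ
    have hMf' : ‖f τ‖ ≤ Mf := hMf τ hτ
    have hMg' : ‖deriv f τ‖ ≤ Mg := hMg τ hτ
    have hMp' : ‖φ'' τ‖ ≤ Mp := hMp τ hτ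
    have hA : ‖deriv f τ * (c * φ' τ)⁻¹‖ ≤ Mg * (2/ρ) := by
      rw [norm_mul]
      exact mul_le_mul hMg' (hinv τ hτ) (by positivity) hMg0
    have hrw : -(c * φ'' τ) / (c * φ' τ) ^ 2
        = -(c * φ'' τ) * ((c * φ' τ)⁻¹) ^ 2 := by
      rw [div_eq_mul_inv, inv_pow]
    have hB : ‖f τ * (-(c * φ'' τ) / (c * φ' τ) ^ 2)‖
        ≤ Mf * (ρ * Mp * (2/ρ)^2) := by
      rw [hrw, norm_mul]
      refine mul_le_mul hMf' ?_ (by positivity) hMf0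
      rw [norm_mul, norm_neg, norm_mul, norm_pow, hcabs]
      refine mul_le_mul (mul_le_mul le_rfl hMp' (norm_nonneg _) hρ0.le) ?_
        (by positivity) (by positivity)
      exact pow_le_pow_left₀ (norm_nonneg _) (hinv τ hτ) 2
    have habs : ‖u' τ‖ ≤ Mg * (2/ρ) + Mf * (ρ * Mp * (2/ρ)^2) :=
      le_trans (norm_add_le _ _) (add_le_add hA hB)
    have hveq : Mg * (2/ρ) + Mf * (ρ * Mp * (2/ρ)^2) = (2*Mg + 4*Mf*Mp) / ρ := by
      field_simp
      ring
    calc ‖u' τ * v τ‖ = ‖u' τ‖ * ‖v τ‖ := norm_mul _ _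
      _ ≤ (Mg * (2/ρ) + Mf * (ρ * Mp * (2/ρ)^2)) * 1 :=
          mul_le_mul habs (hvle τ hτ) (norm_nonneg _) (by positivity)
      _ = (2*Mg + 4*Mf*Mp) / ρ := by rw [mul_one, hveq]
  -- bound the integral of u' * v
  have hint : ‖∫ τ in (0:ℝ)..t, u' τ * v τ‖ ≤ (2*Mg + 4*Mf*Mp) / ρ * |t - 0| := by
    apply intervalIntegral.norm_integral_le_of_norm_le_const
    intro x hx
    have hx' : x ∈ Icc (0:ℝ) T := hsub (mem_Icc_of_Ioc (by rwa [uIoc_of_le ht.1] at hx))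
    exact hu'b x hx'
  have hintle : ‖∫ τ in (0:ℝ)..t, u' τ * v τ‖
      ≤ (2*Mg + 4*Mf*Mp) / ρ * T := by
    refine le_trans hint ?_
    rw [sub_zero, abs_of_nonneg ht.1]
    exact mul_le_mul_of_nonneg_left ht.2 (by positivity)
  -- bound the boundary term
  have hbdy : ‖u t * v t‖ ≤ Mf * (2/ρ) := by
    have : ‖u t‖ ≤ Mf * (2/ρ) := by
      rw [hu]; simp only
      rw [norm_mul]
      exact mul_le_mul (hMf t ht) (hinv t ht) (by positivity) hMf0
    calc ‖u t * v t‖ = ‖u t‖ * ‖v t‖ := norm_mul _ _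
      _ ≤ (Mf * (2/ρ)) * 1 := mul_le_mul this (hvle t ht) (norm_nonneg _) (by positivity)
      _ = Mf * (2/ρ) := mul_one _
  calc ‖u t * v t - ∫ τ in (0:ℝ)..t, u' τ * v τ‖
      ≤ ‖u t * v t‖ + ‖∫ τ in (0:ℝ)..t, u' τ * v τ‖ := by
        rw [sub_eq_add_neg]
        refine le_trans (norm_add_le _ _) ?_
        rw [norm_neg]
    _ ≤ Mf * (2/ρ) + (2*Mg + 4*Mf*Mp) / ρ * T := add_le_add hbdy hintle
    _ ≤ (2*Mf + T*(2*Mg + 4*Mf*Mp) + 1) / ρ := by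
        have heq : Mf * (2/ρ) + (2*Mg + 4*Mf*Mp)/ρ*T
            = (2*Mf + T*(2*Mg + 4*Mf*Mp))/ρ := by
          field_simp
        rw [heq, div_le_div_iff_of_pos_right hρ0]
        linarith
end
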